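/- Let q be a prime, p a positive integer, and F = GF(q^p). Let k, u, w be nonnegative integers and let z_1, …, z_w ∈ F be points whose GF(q)-linear span has dimension ν, with ν ≤ u. Let M be any random variable taking values in F^k, let R be uniformly distributed on F^u, with M and R stochastically independent, and define E = (E_1,…,E_w) by E_i = ∑_{j=1}^{k} M_j z_i^{q^{j-1}} + ∑_{j=1}^{u} R_j z_i^{q^{k+j-1}}. Then the conditional entropy of the random padding given the eavesdropped symbols and the message satisfies H(R | (E,M)) = (u - ν)·p·log q. -/

import Mathlib

open scoped Classical

/-- Probability that the random variable `X` (on finite sample space `Ω` with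
probability mass function `p`) takes the value `s`. -/
noncomputable def probOf {Ω S : Type*} [Fintype Ω] (p : Ω → ℝ) (X : Ω → S) (s : S) : ℝ :=
  ∑ ω ∈ Finset.univ.filter (fun ω => X ω = s), p ω

/-- Shannon entropy (natural logarithm) of the random variable `X`. Since
`Real.log 0 = 0`, the convention `0 · log 0 = 0` is automatic. -/
noncomputable def shannonEntropy {Ω S : Type*} [Fintype Ω] [Fintype S]
    (p : Ω → ℝ) (X : Ω → S) : ℝ :=
  -∑ s : S, probOf p X s * Real.log (probOf p X s)

/-- Conditional entropy `H(X | Y) = H(X, Y) - H(Y)`. -/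
noncomputable def condEntropyRV {Ω S T : Type*} [Fintype Ω] [Fintype S] [Fintype T]
    (p : Ω → ℝ) (X : Ω → S) (Y : Ω → T) : ℝ :=
  shannonEntropy p (fun ω => (X ω, Y ω)) - shannonEntropy p Y

/-- Mutual information `I(X; Y) = H(X) + H(Y) - H(X, Y)`. -/
noncomputable def mutualInfoRV {Ω S T : Type*} [Fintype Ω] [Fintype S] [Fintype T]
    (p : Ω → ℝ) (X : Ω → S) (Y : Ω → T) : ℝ :=
  shannonEntropy p X + shannonEntropy p Y - shannonEntropy p (fun ω => (X ω, Y ω))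

/-- `X` and `Y` are stochastically independent random variables. -/
def IndepRV {Ω S T : Type*} [Fintype Ω] (p : Ω → ℝ) (X : Ω → S) (Y : Ω → T) : Prop :=
  ∀ s t, probOf p (fun ω => (X ω, Y ω)) (s, t) = probOf p X s * probOf p Y t


section AuxEntropy
open Polynomial

section Entropy
variable {Ω S T : Type*} [Fintype Ω]

lemma probOf_comp [Fintype S] (pr : Ω → ℝ) (X : Ω → S) (f : S → T) (t : T) :
    probOf pr (fun ω => f (X ω)) t
      = ∑ s ∈ Finset.univ.filter (fun s => f s = t), probOf pr X s := by
  have h : ∀ s, (if f s = t then probOf pr X s else 0)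
      = ∑ ω : Ω, if X ω = s then (if f s = t then pr ω else 0) else 0 := by
    intro s
    split
    · rw [probOf, Finset.sum_filter]
    · simp
  rw [Finset.sum_filter]
  simp_rw [h]
  rw [Finset.sum_comm]
  simp [Finset.sum_ite_eq, probOf, Finset.sum_filter]

lemma sum_probOf [Fintype S] (pr : Ω → ℝ) (X : Ω → S) :
    ∑ s : S, probOf pr X s = ∑ ω : Ω, pr ω := by
  simp only [probOf, Finset.sum_filter]
  rw [Finset.sum_comm]
  simp [Finset.sum_ite_eq]

lemma probOf_map_inj (pr : Ω → ℝ) (X : Ω → S) {g : S → T} (hg : Function.Injective g) (s : S) :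
    probOf pr (fun ω => g (X ω)) (g s) = probOf pr X s := by
  unfold probOf
  congr 1
  ext ω
  simp [hg.eq_iff]

lemma probOf_comp_eq_zero (pr : Ω → ℝ) (X : Ω → S) {g : S → T} {t : T}
    (ht : t ∉ Set.range g) : probOf pr (fun ω => g (X ω)) t = 0 := by
  unfold probOf
  rw [Finset.filter_false_of_mem, Finset.sum_empty]
  intro ω _
  exact fun h => ht ⟨X ω, h⟩



section Entropy2
variable {Ω S T : Type*} [Fintype Ω]

lemma shannonEntropy_comp_inj [Fintype S] [Fintype T] (pr : Ω → ℝ) (X : Ω → S)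
    {g : S → T} (hg : Function.Injective g) :
    shannonEntropy pr (fun ω => g (X ω)) = shannonEntropy pr X := by
  unfold shannonEntropy
  congr 1
  rw [← Finset.sum_subset (Finset.subset_univ (Finset.univ.image g))]
  · rw [Finset.sum_image (fun a _ b _ h => hg h)]
    exact Finset.sum_congr rfl fun s _ => by rw [probOf_map_inj pr X hg]
  · intro t _ ht
    rw [probOf_comp_eq_zero pr X (g := g) (by simpa using ht)]
    simp

lemma mul_log_mul (a b : ℝ) :
    (a * b) * Real.log (a * b) = a * (b * Real.log b) + b * (a * Real.log a) := by
  rcases eq_or_ne a 0 with h | h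
  · simp [h]
  rcases eq_or_ne b 0 with h' | h'
  · simp [h']
  rw [Real.log_mul h h']
  ring

lemma shannonEntropy_pair_indep [Fintype S] [Fintype T] (pr : Ω → ℝ)
    (hsum : ∑ ω : Ω, pr ω = 1) (X : Ω → S) (Y : Ω → T) (h : IndepRV pr X Y) :
    shannonEntropy pr (fun ω => (X ω, Y ω)) = shannonEntropy pr X + shannonEntropy pr Y := by
  have hX : ∑ s : S, probOf pr X s = 1 := by rw [sum_probOf, hsum]
  have hY : ∑ t : T, probOf pr Y t = 1 := by rw [sum_probOf, hsum]
  unfold shannonEntropy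
  rw [← neg_add]
  congr 1
  rw [Fintype.sum_prod_type]
  have : ∀ s t, probOf pr (fun ω => (X ω, Y ω)) (s, t)
        * Real.log (probOf pr (fun ω => (X ω, Y ω)) (s, t))
      = probOf pr X s * (probOf pr Y t * Real.log (probOf pr Y t))
        + probOf pr Y t * (probOf pr X s * Real.log (probOf pr X s)) := by
    intro s t
    rw [h s t, mul_log_mul]
  calc ∑ s, ∑ t, probOf pr (fun ω => (X ω, Y ω)) (s, t)
        * Real.log (probOf pr (fun ω => (X ω, Y ω)) (s, t))
      = ∑ s, ∑ t, (probOf pr X s * (probOf pr Y t * Real.log (probOf pr Y t))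
        + probOf pr Y t * (probOf pr X s * Real.log (probOf pr X s))) := by
        exact Finset.sum_congr rfl fun s _ => Finset.sum_congr rfl fun t _ => this s t
    _ = ∑ s, (probOf pr X s * (∑ t, probOf pr Y t * Real.log (probOf pr Y t))
        + (∑ t, probOf pr Y t) * (probOf pr X s * Real.log (probOf pr X s))) := by
        refine Finset.sum_congr rfl fun s _ => ?_
        rw [Finset.sum_add_distrib, Finset.mul_sum, Finset.sum_mul]
    _ = ∑ s, (probOf pr X s * (∑ t, probOf pr Y t * Real.log (probOf pr Y t))
        + (probOf pr X s * Real.log (probOf pr X s))) := by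
        simp_rw [hY, one_mul]
    _ = (∑ s, probOf pr X s) * (∑ t, probOf pr Y t * Real.log (probOf pr Y t))
        + ∑ s, probOf pr X s * Real.log (probOf pr X s) := by
        rw [Finset.sum_add_distrib, Finset.sum_mul]
    _ = _ := by rw [hX]; ring

lemma indepRV_comp_right {T' : Type*} [Fintype S] [Fintype T] (pr : Ω → ℝ) (X : Ω → S) (Y : Ω → T)
    (h : IndepRV pr X Y) (f : T → T') : IndepRV pr X (fun ω => f (Y ω)) := by
  intro s t
  have h1 : probOf pr (fun ω => (X ω, f (Y ω))) (s, t)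
      = probOf pr (fun ω => (fun z : S × T => (z.1, f z.2)) ((fun ω => (X ω, Y ω)) ω)) (s, t) := rfl
  rw [h1, probOf_comp pr (fun ω => (X ω, Y ω)) (fun z : S × T => (z.1, f z.2)) (s, t)]
  refine Eq.trans (Finset.sum_congr
    (s₂ := (Finset.univ.filter (fun a : S => a = s)) ×ˢ (Finset.univ.filter (fun b : T => f b = t)))
    (by ext z; simp only [Finset.mem_filter, Finset.mem_product, Finset.mem_univ, true_and, Prod.ext_iff]) (fun _ _ => rfl)) ?_
  rw [Finset.sum_product]
  refine Eq.trans (Finset.sum_congr rfl fun a _ => Finset.sum_congr rfl fun b _ => h a b) ?_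
  rw [← Finset.sum_mul_sum]
  rw [probOf_comp pr Y f t]
  congr 1
  simp [Finset.sum_filter, Finset.sum_ite_eq']
end Entropy2

section Unif
variable {Ω S T : Type*} [Fintype Ω]

lemma shannonEntropy_uniform [Fintype S] [Nonempty S] (pr : Ω → ℝ) (X : Ω → S)
    (hX : ∀ s, probOf pr X s = 1 / (Fintype.card S : ℝ)) :
    shannonEntropy pr X = Real.log (Fintype.card S) := by
  have hN : (0:ℝ) < (Fintype.card S : ℝ) := by
    exact_mod_cast Fintype.card_pos
  unfold shannonEntropy
  simp_rw [hX]
  rw [Finset.sum_const, Finset.card_univ, nsmul_eq_mul, one_div, Real.log_inv]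
  field_simp

lemma shannonEntropy_comp_uniform [Fintype S] [Nonempty S] [Fintype T] (pr : Ω → ℝ) (X : Ω → S)
    (hX : ∀ s, probOf pr X s = 1 / (Fintype.card S : ℝ)) (f : S → T) (K : ℕ) (hK : 0 < K)
    (hfib' : ∀ t ∈ Set.range f, Nat.card {s // f s = t} = K) :
    shannonEntropy pr (fun ω => f (X ω)) = Real.log (Fintype.card S) - Real.log K := by
  have hfib : ∀ t ∈ Set.range f, (Finset.univ.filter (fun s => f s = t)).card = K := by
    intro t ht
    rw [← hfib' t ht, Nat.card_eq_fintype_card, Fintype.card_subtype]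
  set N : ℝ := (Fintype.card S : ℝ) with hNdef
  have hN : (0:ℝ) < N := by rw [hNdef]; exact_mod_cast (Fintype.card_pos : 0 < Fintype.card S)
  have hKR : (0:ℝ) < (K:ℝ) := by exact_mod_cast hK
  have hprob : ∀ t : T, probOf pr (fun ω => f (X ω)) t
      = ((Finset.univ.filter (fun s => f s = t)).card : ℝ) / N := by
    intro t
    rw [probOf_comp pr X f t]
    simp_rw [hX]
    rw [Finset.sum_const, nsmul_eq_mul]
    ring
  unfold shannonEntropy
  have hzero : ∀ t ∈ Finset.univ, t ∉ Finset.univ.image f →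
      probOf pr (fun ω => f (X ω)) t * Real.log (probOf pr (fun ω => f (X ω)) t) = 0 := by
    intro t _ ht
    have : (Finset.univ.filter (fun s => f s = t)) = ∅ := by
      rw [Finset.filter_eq_empty_iff]
      intro s _
      exact fun h => ht (Finset.mem_image.2 ⟨s, Finset.mem_univ s, h⟩)
    rw [hprob, this]
    simp
  rw [← Finset.sum_subset (Finset.subset_univ (Finset.univ.image f)) hzero]
  have hterm : ∀ t ∈ Finset.univ.image f,
      probOf pr (fun ω => f (X ω)) t * Real.log (probOf pr (fun ω => f (X ω)) t)
        = (K / N) * Real.log (K / N) := by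
    intro t ht
    obtain ⟨s, _, hs⟩ := Finset.mem_image.1 ht
    rw [hprob, hfib t ⟨s, hs⟩]
  rw [Finset.sum_congr rfl hterm, Finset.sum_const, nsmul_eq_mul]
  have hcount : ((Finset.univ.image f).card : ℝ) * K = N := by
    have h1 : (Finset.univ : Finset S).card = ∑ t ∈ Finset.univ.image f,
        (Finset.univ.filter (fun s => f s = t)).card :=
      Finset.card_eq_sum_card_fiberwise (fun s _ => Finset.mem_image.2 ⟨s, Finset.mem_univ s, rfl⟩)
    have h2 : ∑ t ∈ Finset.univ.image f, (Finset.univ.filter (fun s => f s = t)).card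
        = (Finset.univ.image f).card * K := by
      rw [Finset.sum_congr rfl (fun t ht => hfib t (by
        obtain ⟨s, _, hs⟩ := Finset.mem_image.1 ht; exact ⟨s, hs⟩)), Finset.sum_const,
        smul_eq_mul]
    have := h1.trans h2
    rw [Finset.card_univ] at this
    rw [hNdef]
    exact_mod_cast this.symm
  have hcard : ((Finset.univ.image f).card : ℝ) = N / K := by
    field_simp at hcount ⊢
    linarith [hcount]
  rw [hcard, Real.log_div (ne_of_gt hKR) (ne_of_gt hN)]
  field_simp
  ring
end Unif

variable (q p : ℕ) [Fact q.Prime]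

lemma fixed_of_pow_card (b : GaloisField q p) (hb : b ^ q = b) :
    ∃ e : ZMod q, algebraMap (ZMod q) (GaloisField q p) e = b := by
  by_contra hcon
  push_neg at hcon
  set P : (GaloisField q p)[X] := X ^ q - X with hP
  have hq2 : 1 < q := (Fact.out : q.Prime).one_lt
  have hdeg : P.natDegree = q := by
    rw [hP, natDegree_sub_eq_left_of_natDegree_lt]
    · exact natDegree_X_pow q
    · rw [natDegree_X, natDegree_X_pow]; exact hq2
  have hP0 : P ≠ 0 := fun h => by simp [h, hq2] at hdeg; omega
  have hroot : ∀ a : GaloisField q p, a ^ q = a → a ∈ P.roots := by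
    intro a ha
    rw [mem_roots hP0]
    simp [hP, IsRoot, ha]
  set A : Finset (GaloisField q p) :=
    insert b ((Finset.univ : Finset (ZMod q)).image (algebraMap (ZMod q) (GaloisField q p)))
    with hA
  have hbA : b ∉ (Finset.univ : Finset (ZMod q)).image (algebraMap (ZMod q) (GaloisField q p)) := by
    intro hmem
    obtain ⟨e, _, he⟩ := Finset.mem_image.1 hmem
    exact hcon e he
  have hcardA : A.card = q + 1 := by
    rw [hA, Finset.card_insert_of_notMem hbA,
      Finset.card_image_of_injective _ (algebraMap (ZMod q) (GaloisField q p)).injective,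
      Finset.card_univ, ZMod.card]
  have hsub : A.val ⊆ P.roots := by
    intro a ha
    rw [Finset.mem_val] at ha
    rcases Finset.mem_insert.1 ha with h | h
    · exact hroot a (h ▸ hb)
    · obtain ⟨e, _, he⟩ := Finset.mem_image.1 h
      refine hroot a ?_
      rw [← he, ← map_pow, ZMod.pow_card]
  have := Polynomial.card_le_degree_of_subset_roots hsub
  omega

lemma moore_lemma : ∀ (u k : ℕ) {ι : Type*} (s : Finset ι)
    (x a : ι → GaloisField q p), s.card ≤ u →
    (∀ d : ι → ZMod q, ∑ t ∈ s, d t • x t = 0 → ∀ t ∈ s, d t = 0) →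
    (∀ j, j < u → ∑ t ∈ s, a t * x t ^ q ^ (k + j) = 0) →
    ∀ t ∈ s, a t = 0 := by
  intro u
  induction u with
  | zero =>
    intro k ι s x a hcard _ _ t ht
    rw [Nat.le_zero, Finset.card_eq_zero] at hcard
    subst hcard
    exact absurd ht (Finset.notMem_empty t)
  | succ u ih =>
    intro k ι s x a hcard hind heq t₀ ht₀
    by_contra hne
    have hpow : ∀ (y w : GaloisField q p) (m : ℕ), (y * w ^ q ^ m) ^ q = y ^ q * w ^ q ^ (m + 1) := by
      intro y w m
      rw [mul_pow, ← pow_mul, ← pow_succ]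
    have hb : ∀ j, j < u + 1 →
        ∑ t ∈ s, (a t * (a t₀)⁻¹) * x t ^ q ^ (k + j) = 0 := by
      intro j hj
      have h2 : ∑ t ∈ s, (a t * (a t₀)⁻¹) * x t ^ q ^ (k + j)
          = (∑ t ∈ s, a t * x t ^ q ^ (k + j)) * (a t₀)⁻¹ := by
        rw [Finset.sum_mul]
        exact Finset.sum_congr rfl fun t _ => by ring
      rw [h2, heq j hj, zero_mul]
    have hb₀ : a t₀ * (a t₀)⁻¹ = 1 := mul_inv_cancel₀ hne
    have hc : ∀ j, j < u → ∑ t ∈ s.erase t₀,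
        ((a t * (a t₀)⁻¹) ^ q - (a t * (a t₀)⁻¹)) * x t ^ q ^ ((k + 1) + j) = 0 := by
      intro j hj
      have e1 : ∑ t ∈ s, (a t * (a t₀)⁻¹) ^ q * x t ^ q ^ (k + 1 + j) = 0 := by
        have h3 := congrArg (fun y => y ^ q) (hb j (by omega))
        simp only [zero_pow (Fact.out : q.Prime).ne_zero] at h3
        rw [sum_pow_char] at h3
        rw [← h3]
        refine Finset.sum_congr rfl fun t _ => ?_
        rw [hpow, show k + j + 1 = k + 1 + j from by omega]
      have e2 : ∑ t ∈ s, (a t * (a t₀)⁻¹) * x t ^ q ^ (k + 1 + j) = 0 := by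
        have h4 := hb (j + 1) (by omega)
        rw [show k + (j + 1) = k + 1 + j by omega] at h4
        exact h4
      have e3 : ∑ t ∈ s, ((a t * (a t₀)⁻¹) ^ q - (a t * (a t₀)⁻¹)) * x t ^ q ^ (k + 1 + j) = 0 := by
        simp_rw [sub_mul]
        rw [Finset.sum_sub_distrib, e1, e2, sub_zero]
      have hct₀ : ((a t₀ * (a t₀)⁻¹) ^ q - (a t₀ * (a t₀)⁻¹)) * x t₀ ^ q ^ (k + 1 + j) = 0 := by
        rw [hb₀]
        simp
      rw [← Finset.sum_erase s hct₀] at e3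
      exact e3
    have hcz : ∀ t ∈ s.erase t₀, (a t * (a t₀)⁻¹) ^ q - (a t * (a t₀)⁻¹) = 0 := by
      refine ih (k + 1) (s.erase t₀) x _ ?_ ?_ hc
      · have := Finset.card_erase_of_mem ht₀
        omega
      · intro d hd t ht
        have hsum : ∑ t' ∈ s, (if t' ∈ s.erase t₀ then d t' else 0) • x t' = 0 := by
          rw [← Finset.add_sum_erase s _ ht₀]
          rw [if_neg (Finset.notMem_erase t₀ s), zero_smul, zero_add, ← hd]
          exact Finset.sum_congr rfl fun t' ht' => by rw [if_pos ht']
        have h5 := hind _ hsum t (Finset.mem_of_mem_erase ht)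
        rwa [if_pos ht] at h5
    have hfixed : ∀ t ∈ s, (a t * (a t₀)⁻¹) ^ q = a t * (a t₀)⁻¹ := by
      intro t ht
      rcases eq_or_ne t t₀ with rfl | htne
      · rw [hb₀, one_pow]
      · exact sub_eq_zero.1 (hcz t (Finset.mem_erase.2 ⟨htne, ht⟩))
    have hchoice : ∀ t, ∃ e : ZMod q, t ∈ s →
        algebraMap (ZMod q) (GaloisField q p) e = a t * (a t₀)⁻¹ := by
      intro t
      by_cases ht : t ∈ s
      · obtain ⟨e, he⟩ := fixed_of_pow_card q p _ (hfixed t ht)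
        exact ⟨e, fun _ => he⟩
      · exact ⟨0, fun h => absurd h ht⟩
    choose d hd using hchoice
    have hkey : (∑ t ∈ s, d t • x t) ^ q ^ k = 0 := by
      rw [sum_pow_char_pow]
      have h6 : ∀ t ∈ s, (d t • x t) ^ q ^ k = (a t * (a t₀)⁻¹) * x t ^ q ^ k := by
        intro t ht
        rw [Algebra.smul_def, mul_pow, ← map_pow, ZMod.pow_card_pow, hd t ht]
      rw [Finset.sum_congr rfl h6]
      have h7 := hb 0 (by omega)
      simpa using h7
    have hzero : ∑ t ∈ s, d t • x t = 0 :=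
      pow_eq_zero_iff (pow_ne_zero k (Fact.out : q.Prime).ne_zero) |>.1 hkey
    have h8 := hind d hzero t₀ ht₀
    have h9 := hd t₀ ht₀
    rw [h8, map_zero, hb₀] at h9
    exact zero_ne_one h9


end Entropy

end AuxEntropy

/-- with `F = GF(q^p)`, evaluation points `z_1, …, z_w` whose
`GF(q)`-linear span has dimension `ν ≤ u`, message `M` with values in `F^k`,
padding `R` uniform on `F^u` independent of `M`, and
`E_i = ∑_{j=1}^{k} M_j z_i^{q^{j-1}} + ∑_{j=1}^{u} R_j z_i^{q^{k+j-1}}`,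
the conditional entropy of the padding given the eavesdropped symbols and the
message is `H(R | (E, M)) = (u - ν) · p · log q`. -/
theorem secure_RFC_conditional_entropy
    (q p k u w ν : ℕ) [Fact q.Prime] (hp : 0 < p)
    [Fintype (GaloisField q p)]
    {Ω : Type*} [Fintype Ω]
    (pr : Ω → ℝ) (hpr : ∀ ω, 0 ≤ pr ω) (hsum : ∑ ω : Ω, pr ω = 1)
    (z : Fin w → GaloisField q p)
    (hν : Module.finrank (ZMod q) (Submodule.span (ZMod q) (Set.range z)) = ν)
    (hνu : ν ≤ u)
    (M : Ω → Fin k → GaloisField q p)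
    (R : Ω → Fin u → GaloisField q p)
    (hMR : IndepRV pr M R)
    (hR : ∀ v : Fin u → GaloisField q p,
        probOf pr R v = 1 / (Fintype.card (Fin u → GaloisField q p) : ℝ))
    (E : Ω → Fin w → GaloisField q p)
    (hE : ∀ ω (i : Fin w),
        E ω i = ∑ j : Fin k, M ω j * z i ^ q ^ (j : ℕ)
              + ∑ j : Fin u, R ω j * z i ^ q ^ (k + (j : ℕ))) :
    condEntropyRV pr R (fun ω => (E ω, M ω)) =
      ((u - ν : ℕ) : ℝ) * (p : ℝ) * Real.log (q : ℝ) := by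
  have hq2 : 1 < q := (Fact.out : q.Prime).one_lt
  -- the linear encoding map
  set A : Matrix (Fin w) (Fin u) (GaloisField q p) :=
    Matrix.of (fun i j => z i ^ q ^ (k + (j : ℕ))) with hA
  set Lf : (Fin u → GaloisField q p) →ₗ[GaloisField q p] (Fin w → GaloisField q p) :=
    A.mulVecLin with hLfdef
  have hLf : ∀ r, Lf r = fun i => ∑ j : Fin u, r j * z i ^ q ^ (k + (j : ℕ)) := by
    intro r
    funext i
    simp [hLfdef, Matrix.mulVecLin_apply, Matrix.mulVec, dotProduct, hA, mul_comm]
  set fM : (Fin k → GaloisField q p) → (Fin w → GaloisField q p) :=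
    fun m i => ∑ j : Fin k, m j * z i ^ q ^ (j : ℕ) with hfM
  have hEdec : ∀ ω, E ω = fM (M ω) + Lf (R ω) := by
    intro ω
    funext i
    rw [hE ω i, hLf]
    simp [hfM]
  ---- Entropy reductions
  have hg1 : Function.Injective (fun mr : (Fin k → GaloisField q p) × (Fin u → GaloisField q p) =>
      (mr.2, (fM mr.1 + Lf mr.2, mr.1))) := by
    intro a b hab
    simp only [Prod.mk.injEq] at hab
    exact Prod.ext hab.2.2 hab.1
  have hfun1 : (fun ω => (R ω, (E ω, M ω)))
      = (fun ω => (fun mr : (Fin k → GaloisField q p) × (Fin u → GaloisField q p) =>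
          (mr.2, (fM mr.1 + Lf mr.2, mr.1))) ((fun ω => (M ω, R ω)) ω)) := by
    funext ω
    simp only
    rw [← hEdec ω]
  have hH1 : shannonEntropy pr (fun ω => (R ω, (E ω, M ω)))
      = shannonEntropy pr M + shannonEntropy pr R := by
    rw [hfun1, shannonEntropy_comp_inj pr _ hg1,
      shannonEntropy_pair_indep pr hsum M R hMR]
  have hg2 : Function.Injective (fun my : (Fin k → GaloisField q p) × (Fin w → GaloisField q p) =>
      (fM my.1 + my.2, my.1)) := by
    intro a b hab
    simp only [Prod.mk.injEq] at hab
    refine Prod.ext hab.2 ?_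
    have := hab.1
    rw [hab.2] at this
    exact add_left_cancel this
  have hfun2 : (fun ω => (E ω, M ω))
      = (fun ω => (fun my : (Fin k → GaloisField q p) × (Fin w → GaloisField q p) =>
          (fM my.1 + my.2, my.1)) ((fun ω => (M ω, Lf (R ω))) ω)) := by
    funext ω
    simp only
    rw [← hEdec ω]
  have hH2 : shannonEntropy pr (fun ω => (E ω, M ω))
      = shannonEntropy pr M + shannonEntropy pr (fun ω => Lf (R ω)) := by
    rw [hfun2, shannonEntropy_comp_inj pr _ hg2,
      shannonEntropy_pair_indep pr hsum M _ (indepRV_comp_right pr M R hMR ⇑Lf)]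
  ---- rank computation
  set W := Submodule.span (ZMod q) (Set.range z) with hW
  let B : Module.Basis (Fin ν) (ZMod q) ↥W := Module.finBasisOfFinrankEq (ZMod q) ↥W hν
  set x : Fin ν → GaloisField q p := fun t => ((B t : ↥W) : GaloisField q p) with hx
  have hxli : LinearIndependent (ZMod q) x :=
    B.linearIndependent.map' W.subtype (Submodule.ker_subtype W)
  have hind : ∀ d : Fin ν → ZMod q, ∑ t ∈ Finset.univ, d t • x t = 0 →
      ∀ t ∈ Finset.univ, d t = 0 := by
    intro d hd t _
    exact Fintype.linearIndependent_iff.mp hxli d hd t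
  set ψ : GaloisField q p → (Fin u → GaloisField q p) :=
    fun v => fun j => v ^ q ^ (k + (j : ℕ)) with hψ
  have hψsmul : ∀ (e : ZMod q) (v : GaloisField q p) (m : ℕ),
      (e • v) ^ q ^ m = algebraMap (ZMod q) (GaloisField q p) e * v ^ q ^ m := by
    intro e v m
    rw [Algebra.smul_def, mul_pow, ← map_pow, ZMod.pow_card_pow]
  have hψlin : ∀ {ιt : Type} [Fintype ιt] (c : ιt → ZMod q) (v : ιt → GaloisField q p),
      ψ (∑ t : ιt, c t • v t)
        = ∑ t : ιt, (algebraMap (ZMod q) (GaloisField q p) (c t)) • ψ (v t) := by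
    intro ιt _ c v
    funext j
    simp only [hψ, Finset.sum_apply, Pi.smul_apply, smul_eq_mul]
    rw [sum_pow_char_pow]
    exact Finset.sum_congr rfl fun t _ => hψsmul (c t) (v t) _
  have hψx_indep : LinearIndependent (GaloisField q p) (fun t => ψ (x t)) := by
    rw [Fintype.linearIndependent_iff]
    intro g hg t
    refine moore_lemma q p u k Finset.univ x g ?_ hind ?_ t (Finset.mem_univ t)
    · simpa using hνu
    · intro j hj
      have h := congrFun hg ⟨j, hj⟩
      simpa [hψ, Finset.sum_apply] using h
  have hspan : Submodule.span (GaloisField q p) (Set.range (fun i => ψ (z i)))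
      = Submodule.span (GaloisField q p) (Set.range (fun t => ψ (x t))) := by
    apply le_antisymm
    · rw [Submodule.span_le]
      rintro _ ⟨i, rfl⟩
      have hzi : z i ∈ W := Submodule.subset_span (Set.mem_range_self i)
      have h := B.sum_repr ⟨z i, hzi⟩
      have h2 := congrArg W.subtype h
      rw [map_sum] at h2
      simp only [map_smul, Submodule.coe_subtype] at h2
      have h3 : z i = ∑ t : Fin ν, (B.repr ⟨z i, hzi⟩) t • x t := h2.symm
      show ψ (z i) ∈ Submodule.span (GaloisField q p) (Set.range (fun t => ψ (x t)))
      rw [h3, hψlin]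
      exact Submodule.sum_mem _ fun t _ => Submodule.smul_mem _ _
        (Submodule.subset_span (Set.mem_range_self t))
    · rw [Submodule.span_le]
      rintro _ ⟨t, rfl⟩
      have hxt : x t ∈ Submodule.span (ZMod q) (Set.range z) := (B t).2
      rw [Submodule.mem_span_range_iff_exists_fun (ZMod q)] at hxt
      obtain ⟨c, hc⟩ := hxt
      show ψ (x t) ∈ Submodule.span (GaloisField q p) (Set.range (fun i => ψ (z i)))
      rw [← hc, hψlin]
      exact Submodule.sum_mem _ fun i _ => Submodule.smul_mem _ _
        (Submodule.subset_span (Set.mem_range_self i))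
  have hrank : A.rank = ν := by
    rw [← Matrix.rank_transpose, Matrix.rank, Matrix.range_mulVecLin, Matrix.col, Matrix.transpose_transpose]
    have hrange : Set.range A = Set.range (fun i => ψ (z i)) := rfl
    rw [hrange, hspan, finrank_span_eq_card hψx_indep, Fintype.card_fin]
  have hrangeLf : Module.finrank (GaloisField q p) (LinearMap.range Lf) = ν := hrank
  have hkerLf : Module.finrank (GaloisField q p) (LinearMap.ker Lf) = u - ν := by
    have h1 := LinearMap.finrank_range_add_finrank_ker Lf
    rw [Module.finrank_fin_fun, hrangeLf] at h1
    omega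
  ---- counting
  set K : ℕ := Nat.card ↥(LinearMap.ker Lf) with hK
  have hcardF : Fintype.card (GaloisField q p) = q ^ p := by
    rw [← Nat.card_eq_fintype_card, GaloisField.card q p hp.ne']
  have hKval : K = (q ^ p) ^ (u - ν) := by
    rw [hK, Nat.card_eq_fintype_card, Module.card_eq_pow_finrank (K := GaloisField q p), hkerLf, hcardF]
  have hKpos : 0 < K := by
    rw [hKval]
    positivity
  have hfib : ∀ t ∈ Set.range ⇑Lf, Nat.card {r // Lf r = t} = K := by
    rintro _ ⟨r₀, rfl⟩
    rw [hK]
    refine Nat.card_congr (Equiv.trans (Equiv.mk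
      (fun r => (⟨r.1 - r₀, by rw [map_sub, r.2, sub_self]⟩ : {m // Lf m = 0}))
      (fun m => ⟨m.1 + r₀, by rw [map_add, m.2, zero_add]⟩)
      (fun r => by ext; simp) (fun m => by ext; simp))
      (Equiv.subtypeEquivRight (fun m => ?_)))
    rw [LinearMap.mem_ker]
  ---- put it together
  have hHR : shannonEntropy pr R
      = Real.log (Fintype.card (Fin u → GaloisField q p)) :=
    shannonEntropy_uniform pr R hR
  have hHLR : shannonEntropy pr (fun ω => Lf (R ω))
      = Real.log (Fintype.card (Fin u → GaloisField q p)) - Real.log K :=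
    shannonEntropy_comp_uniform pr R hR ⇑Lf K hKpos hfib
  have : condEntropyRV pr R (fun ω => (E ω, M ω)) = Real.log K := by
    unfold condEntropyRV
    rw [hH1, hH2, hHR, hHLR]
    ring
  rw [this, hKval]
  push_cast
  rw [Real.log_pow, Real.log_pow]
  ring
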